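/- Let G be a finite simple graph on n vertices and H(G) its hairing. Then for every nonzero real number λ, χ_{H(G)}(λ) = λ^n · χ_G(λ − 1/λ), where χ denotes the characteristic polynomial of the adjacency matrix. -/

import Mathlib

open Polynomial

/-- The characteristic polynomial (of the adjacency matrix) of a finite simple graph. -/
noncomputable def charPoly {V : Type*} [Finite V] (G : SimpleGraph V) : Polynomial ℤ :=
  letI := Fintype.ofFinite V
  letI := Classical.decEq V
  letI := Classical.decRel G.Adj
  (SimpleGraph.adjMatrix ℤ G).charpoly

/-- The hairing of `G`: attach a pendant vertex to every vertex of `G`.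
Vertices `(u, false)` form the original graph and `(u, true)` is the pendant at `u`. -/
def hairing {V : Type*} (G : SimpleGraph V) : SimpleGraph (V × Bool) where
  Adj a b := (a.2 = false ∧ b.2 = false ∧ G.Adj a.1 b.1) ∨ (a.1 = b.1 ∧ a.2 ≠ b.2)
  symm := by
    constructor
    rintro a b (⟨ha, hb, hadj⟩ | ⟨h1, h2⟩)
    · exact Or.inl ⟨hb, ha, hadj.symm⟩
    · exact Or.inr ⟨h1.symm, h2.symm⟩
  loopless := by
    constructor
    rintro a (⟨_, _, hadj⟩ | ⟨_, h⟩)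
    · exact G.irrefl hadj
    · exact h rfl

open Matrix in
lemma eval_charpoly' {n : Type*} [Fintype n] [DecidableEq n] (M : Matrix n n ℝ) (r : ℝ) :
    (M.charpoly).eval r = (Matrix.scalar n r - M).det := by
  rw [Matrix.charpoly, _root_.eval_det, matPolyEquiv_charmatrix]
  simp

lemma aeval_charpoly_int {n : Type*} [Fintype n] [DecidableEq n] (M : Matrix n n ℤ) (r : ℝ) :
    Polynomial.aeval r M.charpoly = ((M.map (Int.castRingHom ℝ)).charpoly).eval r := by
  rw [Matrix.charpoly_map M (Int.castRingHom ℝ), aeval_def, eval_map, algebraMap_int_eq]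

lemma adjMatrix_map_int {V : Type*} [Fintype V] [DecidableEq V] (G : SimpleGraph V)
    [DecidableRel G.Adj] :
    (SimpleGraph.adjMatrix ℤ G).map (Int.castRingHom ℝ) = SimpleGraph.adjMatrix ℝ G := by
  ext i j
  simp [SimpleGraph.adjMatrix, Matrix.map_apply, apply_ite]

def sumEquiv (V : Type*) : V ⊕ V ≃ V × Bool where
  toFun := Sum.elim (fun v => (v, false)) (fun v => (v, true))
  invFun p := if p.2 then Sum.inr p.1 else Sum.inl p.1
  left_inv x := by cases x <;> simp
  right_inv p := by rcases p with ⟨v, _ | _⟩ <;> simp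

open Matrix in
lemma hairing_adj {V : Type*} (G : SimpleGraph V) (a b : V × Bool) :
    (hairing G).Adj a b ↔ ((a.2 = false ∧ b.2 = false ∧ G.Adj a.1 b.1) ∨ (a.1 = b.1 ∧ a.2 ≠ b.2)) :=
  Iff.rfl

lemma hairing_block {V : Type*} [Fintype V] [DecidableEq V] [Fintype (V × Bool)] [DecidableEq (V × Bool)] (G : SimpleGraph V)
    [DecidableRel G.Adj] [DecidableRel (hairing G).Adj] (lam : ℝ) :
    (Matrix.scalar (V × Bool) lam - SimpleGraph.adjMatrix ℝ (hairing G)).submatrix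
        (sumEquiv V) (sumEquiv V) =
      Matrix.fromBlocks (Matrix.scalar V lam - SimpleGraph.adjMatrix ℝ G) (-1) (-1)
        (Matrix.scalar V lam) := by
  ext (i | i) (j | j) <;>
    simp only [Matrix.submatrix_apply, sumEquiv, Equiv.coe_fn_mk, Sum.elim_inl, Sum.elim_inr,
      Matrix.fromBlocks_apply₁₁, Matrix.fromBlocks_apply₁₂, Matrix.fromBlocks_apply₂₁,
      Matrix.fromBlocks_apply₂₂, Matrix.sub_apply, Matrix.scalar_apply,
      Matrix.diagonal_apply, SimpleGraph.adjMatrix_apply, hairing_adj, Matrix.neg_apply,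
      Matrix.one_apply, Prod.mk.injEq, and_true, and_false, false_and, true_and, ne_eq] <;>
    split_ifs <;> simp_all

/-- For a finite simple graph `G` on `n` vertices and every nonzero real `λ`,
`χ_{H(G)}(λ) = λ^n · χ_G(λ - 1/λ)`. -/
theorem charPoly_hairing_eval {V : Type*} [Finite V] (G : SimpleGraph V)
    (lam : ℝ) (hlam : lam ≠ 0) :
    Polynomial.aeval lam (charPoly (hairing G)) =
      lam ^ Nat.card V * Polynomial.aeval (lam - 1 / lam) (charPoly G) := by
  letI := Fintype.ofFinite V
  letI := Classical.decEq V
  letI := Classical.decRel G.Adj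
  letI : DecidableRel (hairing G).Adj := Classical.decRel _
  letI := Fintype.ofFinite (V × Bool)
  letI := Classical.decEq (V × Bool)
  classical
  have hD : Invertible (Matrix.scalar V lam) := by
    refine Matrix.invertibleOfIsUnitDet _ ?_
    simp [Matrix.scalar, Matrix.det_diagonal, hlam, isUnit_iff_ne_zero, hlam, pow_ne_zero]
  have hinv : ⅟(Matrix.scalar V lam) = Matrix.scalar V lam⁻¹ := by
    apply invOf_eq_right_inv
    rw [← map_mul]
    simp [hlam]
  rw [charPoly, charPoly, aeval_charpoly_int, aeval_charpoly_int, adjMatrix_map_int,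
    adjMatrix_map_int, eval_charpoly', eval_charpoly',
    ← Matrix.det_submatrix_equiv_self (sumEquiv V), hairing_block,
    Matrix.det_fromBlocks₂₂, hinv]
  have h1 : (Matrix.scalar V lam).det = lam ^ Nat.card V := by
    simp [Matrix.scalar, Matrix.det_diagonal, Nat.card_eq_fintype_card]
  have h2 : Matrix.scalar V lam - SimpleGraph.adjMatrix ℝ G -
      (-1 : Matrix V V ℝ) * Matrix.scalar V lam⁻¹ * (-1) =
      Matrix.scalar V (lam - 1 / lam) - SimpleGraph.adjMatrix ℝ G := by
    rw [neg_one_mul, Matrix.mul_neg, Matrix.mul_one, neg_neg, one_div, map_sub]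
    abel
  rw [h1, h2]
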